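/- Under the assumptions of the cost-difference bound, with V̂_K = E[Σ_{t≥L} v̂(t) v̂(t)ᵀ] ≻ 0 the projected state correlation matrix for gain K, the Polyak–Łojasiewicz inequality holds: J(K) − J(K*) ≤ (‖V̂_{K*}‖ / (4 σ_min(R) σ_min(V̂_K)²)) ‖∇J(K)‖_F², where ∇J(K) = 2 E_K V_K and V_K = P V̂_K Pᵀ with PᵀP = I. -/

import Mathlib

open Matrix

/-- The spectral (2-induced) norm of a real matrix. -/
noncomputable def specNorm {a b : ℕ} (A : Matrix (Fin a) (Fin b) ℝ) : ℝ :=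
  ‖LinearMap.toContinuousLinearMap (Matrix.toEuclideanLin A)‖

/-- The Frobenius norm of a real matrix. -/
noncomputable def frobNorm {a b : ℕ} (A : Matrix (Fin a) (Fin b) ℝ) : ℝ :=
  Real.sqrt (∑ i, ∑ j, A i j ^ 2)

namespace PLAux

open Matrix

/-- Cauchy-Schwarz for dot products of real vectors. -/
lemma cs {n : ℕ} (x y : Fin n → ℝ) : (x ⬝ᵥ y) ^ 2 ≤ (x ⬝ᵥ x) * (y ⬝ᵥ y) := by
  have h := Finset.sum_mul_sq_le_sq_mul_sq Finset.univ x y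
  simpa [dotProduct, pow_two] using h

lemma dot_self_nonneg {n : ℕ} (x : Fin n → ℝ) : 0 ≤ x ⬝ᵥ x :=
  Finset.sum_nonneg fun i _ => mul_self_nonneg _

lemma smul_one_herm {n : ℕ} (σ : ℝ) :
    (σ • (1 : Matrix (Fin n) (Fin n) ℝ)).IsHermitian := by
  show (σ • (1 : Matrix (Fin n) (Fin n) ℝ))ᴴ = _
  rw [Matrix.conjTranspose_smul]
  simp

lemma psd_trace_nonneg {n : ℕ} {A : Matrix (Fin n) (Fin n) ℝ} (hA : A.PosSemidef) :
    0 ≤ A.trace :=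
  Finset.sum_nonneg fun i _ => by
    have := hA.dotProduct_mulVec_nonneg (Pi.single i 1)
    simpa [dotProduct, mulVec, Pi.single_apply] using this

/-- The trace of a product of two PSD matrices is nonnegative. -/
lemma trace_mul_psd_nonneg {n : ℕ} {A B : Matrix (Fin n) (Fin n) ℝ}
    (hA : A.PosSemidef) (hB : B.PosSemidef) : 0 ≤ (A * B).trace := by
  obtain ⟨C, rfl⟩ : ∃ C : Matrix (Fin n) (Fin n) ℝ, A = Cᴴ * C := by
    open scoped MatrixOrder Matrix.Norms.L2Operator in
    exact CStarAlgebra.nonneg_iff_eq_star_mul_self.mp hA.nonneg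
  have h1 : (Cᴴ * C * B).trace = (C * B * Cᴴ).trace := by
    rw [Matrix.trace_mul_cycle, Matrix.trace_mul_cycle]
  rw [h1]
  exact psd_trace_nonneg (hB.mul_mul_conjTranspose_same C)

/-- If `A - σ•1` is PSD with `σ > 0`, then `σ * (x⬝x) ≤ x ⬝ A x`. -/
lemma quad_lb {n : ℕ} {A : Matrix (Fin n) (Fin n) ℝ} {σ : ℝ}
    (hle : (A - σ • (1 : Matrix (Fin n) (Fin n) ℝ)).PosSemidef) (x : Fin n → ℝ) :
    σ * (x ⬝ᵥ x) ≤ x ⬝ᵥ (A *ᵥ x) := by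
  have h := hle.dotProduct_mulVec_nonneg x
  simp only [star_trivial, sub_mulVec, smul_mulVec, one_mulVec, dotProduct_sub,
    dotProduct_smul, smul_eq_mul] at h
  linarith

/-- If `M` is PD with `M ⪰ σ•1`, `σ > 0`, then `σ⁻¹•1 - M⁻¹` is PSD. -/
lemma inv_psd_le {n : ℕ} {M : Matrix (Fin n) (Fin n) ℝ} {σ : ℝ} (hσ : 0 < σ)
    (hM : M.PosDef) (hle : (M - σ • (1 : Matrix (Fin n) (Fin n) ℝ)).PosSemidef) :
    ((σ⁻¹ • (1 : Matrix (Fin n) (Fin n) ℝ)) - M⁻¹).PosSemidef := by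
  refine Matrix.PosSemidef.of_dotProduct_mulVec_nonneg ?_ ?_
  · exact (smul_one_herm σ⁻¹).sub hM.isHermitian.inv
  · intro x
    simp only [star_trivial, sub_mulVec, smul_mulVec, one_mulVec, dotProduct_sub,
      dotProduct_smul, smul_eq_mul]
    set y : Fin n → ℝ := M⁻¹ *ᵥ x with hy
    have hxy : M *ᵥ y = x := by
      rw [hy, mulVec_mulVec, Matrix.mul_nonsing_inv _ hM.det_pos.ne'.isUnit, one_mulVec]
    have hdot : x ⬝ᵥ (M⁻¹ *ᵥ x) = y ⬝ᵥ (M *ᵥ y) := by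
      rw [← hy, ← hxy, dotProduct_comm, hxy]
    rw [hdot]
    set s := y ⬝ᵥ y with hs
    set t := y ⬝ᵥ (M *ᵥ y) with ht
    set X := x ⬝ᵥ x with hX
    have hst : σ * s ≤ t := quad_lb hle y
    have hcs : t ^ 2 ≤ s * X := by
      have h := cs y (M *ᵥ y)
      have h2 : (M *ᵥ y) ⬝ᵥ (M *ᵥ y) = X := by rw [hxy]
      rw [h2] at h
      exact h
    have hs0 : 0 ≤ s := dot_self_nonneg y
    have hX0 : 0 ≤ X := dot_self_nonneg x
    have ht0 : 0 ≤ t := le_trans (mul_nonneg hσ.le hs0) hst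
    have key : σ * t ≤ X := by
      rcases eq_or_lt_of_le ht0 with h0 | h0
      · rw [← h0]; simpa using hX0
      · have h1 : σ * t ^ 2 ≤ σ * (s * X) := by nlinarith
        have h2 : σ * (s * X) ≤ t * X := by nlinarith
        have h3 : σ * t ^ 2 ≤ t * X := le_trans h1 h2
        nlinarith
    have : t ≤ σ⁻¹ * X := by
      rw [le_inv_mul_iff₀ hσ]
      linarith
    linarith

/-- If `A ⪰ σ•1` (σ > 0), then `σ² (x⬝x) ≤ ‖Ax‖²`. -/
lemma sq_quad_lb {n : ℕ} {A : Matrix (Fin n) (Fin n) ℝ} {σ : ℝ} (hσ : 0 < σ)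
    (hle : (A - σ • (1 : Matrix (Fin n) (Fin n) ℝ)).PosSemidef) (x : Fin n → ℝ) :
    σ ^ 2 * (x ⬝ᵥ x) ≤ (A *ᵥ x) ⬝ᵥ (A *ᵥ x) := by
  set s := x ⬝ᵥ x with hs
  set t := x ⬝ᵥ (A *ᵥ x) with ht
  set u := (A *ᵥ x) ⬝ᵥ (A *ᵥ x) with hu
  have hst : σ * s ≤ t := quad_lb hle x
  have hcs : t ^ 2 ≤ s * u := cs x (A *ᵥ x)
  have hs0 : 0 ≤ s := dot_self_nonneg x
  have hu0 : 0 ≤ u := dot_self_nonneg _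
  rcases eq_or_lt_of_le hs0 with h0 | h0
  · rw [← h0]; simpa using hu0
  · have ht0 : 0 ≤ t := le_trans (mul_nonneg hσ.le hs0) hst
    have h1 : (σ * s) ^ 2 ≤ t ^ 2 := pow_le_pow_left₀ (mul_nonneg hσ.le hs0) hst 2
    nlinarith

/-- Spectral-norm quadratic bound: `x ⬝ A x ≤ ‖A‖ * (x ⬝ x)`. -/
lemma dot_le_specNorm {n : ℕ} (A : Matrix (Fin n) (Fin n) ℝ) (x : Fin n → ℝ) :
    x ⬝ᵥ (A *ᵥ x) ≤ specNorm A * (x ⬝ᵥ x) := by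
  set v : EuclideanSpace ℝ (Fin n) := (WithLp.equiv 2 (Fin n → ℝ)).symm x with hv
  have hnv : ‖v‖ = Real.sqrt (x ⬝ᵥ x) := by
    rw [EuclideanSpace.norm_eq]
    congr 1
    simp [dotProduct, hv, Real.norm_eq_abs, sq_abs, pow_two]
  have hAv : ‖(LinearMap.toContinuousLinearMap (Matrix.toEuclideanLin A)) v‖ =
      Real.sqrt ((A *ᵥ x) ⬝ᵥ (A *ᵥ x)) := by
    rw [LinearMap.coe_toContinuousLinearMap']
    rw [hv, WithLp.equiv_symm_apply, Matrix.toEuclideanLin_apply_piLp_toLp]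
    rw [EuclideanSpace.norm_eq]
    congr 1
    simp [dotProduct, Real.norm_eq_abs, sq_abs, pow_two]
  have hop : Real.sqrt ((A *ᵥ x) ⬝ᵥ (A *ᵥ x)) ≤ specNorm A * Real.sqrt (x ⬝ᵥ x) := by
    rw [← hAv, ← hnv]
    exact (LinearMap.toContinuousLinearMap (Matrix.toEuclideanLin A)).le_opNorm v
  have hcs : x ⬝ᵥ (A *ᵥ x) ≤ Real.sqrt (x ⬝ᵥ x) * Real.sqrt ((A *ᵥ x) ⬝ᵥ (A *ᵥ x)) := by
    have h1 : x ⬝ᵥ (A *ᵥ x) ≤ |x ⬝ᵥ (A *ᵥ x)| := le_abs_self _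
    have h2 : |x ⬝ᵥ (A *ᵥ x)| = Real.sqrt ((x ⬝ᵥ (A *ᵥ x)) ^ 2) := by
      rw [Real.sqrt_sq_eq_abs]
    have h3 : Real.sqrt ((x ⬝ᵥ (A *ᵥ x)) ^ 2) ≤
        Real.sqrt ((x ⬝ᵥ x) * ((A *ᵥ x) ⬝ᵥ (A *ᵥ x))) :=
      Real.sqrt_le_sqrt (cs x (A *ᵥ x))
    rw [Real.sqrt_mul (dot_self_nonneg x)] at h3
    linarith
  have hsq : Real.sqrt (x ⬝ᵥ x) * Real.sqrt (x ⬝ᵥ x) = x ⬝ᵥ x :=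
    Real.mul_self_sqrt (dot_self_nonneg x)
  calc x ⬝ᵥ (A *ᵥ x) ≤ Real.sqrt (x ⬝ᵥ x) * Real.sqrt ((A *ᵥ x) ⬝ᵥ (A *ᵥ x)) := hcs
    _ ≤ Real.sqrt (x ⬝ᵥ x) * (specNorm A * Real.sqrt (x ⬝ᵥ x)) :=
        mul_le_mul_of_nonneg_left hop (Real.sqrt_nonneg _)
    _ = specNorm A * (x ⬝ᵥ x) := by rw [mul_comm (Real.sqrt (x ⬝ᵥ x)), mul_assoc, hsq]

/-- `‖A‖•1 - A` is PSD for Hermitian `A`. -/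
lemma specNorm_smul_one_sub_psd {n : ℕ} {A : Matrix (Fin n) (Fin n) ℝ}
    (hA : A.IsHermitian) :
    ((specNorm A • (1 : Matrix (Fin n) (Fin n) ℝ)) - A).PosSemidef := by
  refine Matrix.PosSemidef.of_dotProduct_mulVec_nonneg ?_ ?_
  · exact (smul_one_herm (specNorm A)).sub hA
  · intro x
    simp only [star_trivial, sub_mulVec, smul_mulVec, one_mulVec, dotProduct_sub,
      dotProduct_smul, smul_eq_mul]
    have := dot_le_specNorm A x
    linarith

lemma frobNorm_sq {a b : ℕ} (A : Matrix (Fin a) (Fin b) ℝ) :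
    frobNorm A ^ 2 = (Aᵀ * A).trace := by
  rw [frobNorm, Real.sq_sqrt (by positivity)]
  rw [Matrix.trace]
  simp only [Matrix.diag_apply, Matrix.mul_apply, Matrix.transpose_apply]
  rw [Finset.sum_comm]
  congr 1
  ext i
  congr 1
  ext j
  ring

end PLAux

/-- PL inequality.  Under the cost-difference bound
J(K) − J(K*) ≤ tr(V̂_{K*} Ê_Kᵀ (R + ΠᵀΨ_KΠ)⁻¹ Ê_K) with Ê_K = E_K P,
PᵀP = I, V̂_K ≻ 0 (with V̂_K ⪰ σ_V I, σ_V > 0), R ⪰ σ_R I ≻ 0, Ψ_K ⪰ 0, and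
gradient ∇J(K) = 2 E_K V_K with V_K = P V̂_K Pᵀ, one has
J(K) − J(K*) ≤ (‖V̂_{K*}‖ / (4 σ_R σ_V²)) ‖∇J(K)‖_F². -/
theorem pl_inequality {N m d : ℕ}
    (Pm : Matrix (Fin N) (Fin m) ℝ) (P : Matrix (Fin N) (Fin d) ℝ)
    (R : Matrix (Fin m) (Fin m) ℝ) (ΨK : Matrix (Fin N) (Fin N) ℝ)
    (VhK Vhs : Matrix (Fin d) (Fin d) ℝ)
    (EK : Matrix (Fin m) (Fin N) ℝ)
    (JK Js σR σV : ℝ)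
    (hP : Pᵀ * P = 1)
    (hR : R.PosDef) (hΨK : ΨK.PosSemidef)
    (hVhK : VhK.PosDef) (hVhs : Vhs.PosSemidef)
    (hσR : 0 < σR) (hσRle : (R - σR • (1 : Matrix (Fin m) (Fin m) ℝ)).PosSemidef)
    (hσV : 0 < σV) (hσVle : (VhK - σV • (1 : Matrix (Fin d) (Fin d) ℝ)).PosSemidef)
    (hbound : JK - Js ≤
      (Vhs * (EK * P)ᵀ * (R + Pmᵀ * ΨK * Pm)⁻¹ * (EK * P)).trace) :
    JK - Js ≤ specNorm Vhs / (4 * σR * σV ^ 2)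
        * frobNorm ((2 : ℝ) • (EK * (P * VhK * Pᵀ))) ^ 2 := by
  classical
  open PLAux in
  -- notation
  set E : Matrix (Fin m) (Fin d) ℝ := EK * P with hE
  set M : Matrix (Fin m) (Fin m) ℝ := R + Pmᵀ * ΨK * Pm with hM
  have hct : ∀ {a b : ℕ} (A : Matrix (Fin a) (Fin b) ℝ), Aᴴ = Aᵀ :=
    fun A => Matrix.conjTranspose_eq_transpose_of_trivial A
  -- M is PD
  have hMpsd2 : (Pmᵀ * ΨK * Pm).PosSemidef := by
    have := hΨK.conjTranspose_mul_mul_same Pm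
    rwa [hct] at this
  have hMpd : M.PosDef := hR.add_posSemidef hMpsd2
  have hMinv : (M⁻¹).PosSemidef := hMpd.posSemidef.inv
  -- M ⪰ σR • 1
  have hMle : (M - σR • (1 : Matrix (Fin m) (Fin m) ℝ)).PosSemidef := by
    have h : M - σR • (1 : Matrix (Fin m) (Fin m) ℝ) =
        (R - σR • (1 : Matrix (Fin m) (Fin m) ℝ)) + Pmᵀ * ΨK * Pm := by
      rw [hM]; abel
    rw [h]
    exact hσRle.add hMpsd2
  -- PSD matrices appearing below
  have hB1 : (Eᵀ * M⁻¹ * E).PosSemidef := by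
    have := hMinv.conjTranspose_mul_mul_same E
    rwa [hct] at this
  have hEEt : (E * Eᵀ).PosSemidef := by
    have := Matrix.posSemidef_self_mul_conjTranspose E
    rwa [hct] at this
  set c : ℝ := specNorm Vhs with hc
  have hc0 : 0 ≤ c := norm_nonneg _
  -- Step 1 : tr(Vhs * (Eᵀ M⁻¹ E)) ≤ c * tr(Eᵀ M⁻¹ E)
  have step1 : (Vhs * (Eᵀ * M⁻¹ * E)).trace ≤ c * (Eᵀ * M⁻¹ * E).trace := by
    have h := trace_mul_psd_nonneg (specNorm_smul_one_sub_psd hVhs.1) hB1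
    rw [Matrix.sub_mul, Matrix.smul_mul, Matrix.one_mul, Matrix.trace_sub,
      Matrix.trace_smul, smul_eq_mul] at h
    linarith
  -- Step 2 : tr(Eᵀ M⁻¹ E) ≤ σR⁻¹ * tr(E Eᵀ)
  have step2 : (Eᵀ * M⁻¹ * E).trace ≤ σR⁻¹ * (E * Eᵀ).trace := by
    have hcyc : (Eᵀ * M⁻¹ * E).trace = (M⁻¹ * (E * Eᵀ)).trace := by
      rw [Matrix.trace_mul_cycle, Matrix.trace_mul_comm]
    have h := trace_mul_psd_nonneg (inv_psd_le hσR hMpd hMle) hEEt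
    rw [Matrix.sub_mul, Matrix.smul_mul, Matrix.one_mul, Matrix.trace_sub,
      Matrix.trace_smul, smul_eq_mul] at h
    rw [hcyc]
    linarith
  -- Step 3 : σV² * tr(E Eᵀ) ≤ tr(E (VhK * VhK) Eᵀ)
  have hVhKT : VhKᵀ = VhK := by rw [← hct]; exact hVhK.isHermitian
  have hVsq : ((VhK * VhK) - σV ^ 2 • (1 : Matrix (Fin d) (Fin d) ℝ)).PosSemidef := by
    refine Matrix.PosSemidef.of_dotProduct_mulVec_nonneg ?_ ?_
    · have h1 : (VhK * VhK).IsHermitian := by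
        have := hVhK.isHermitian
        unfold Matrix.IsHermitian at *
        rw [Matrix.conjTranspose_mul, this]
      exact h1.sub (PLAux.smul_one_herm (σV ^ 2))
    · intro x
      simp only [star_trivial, sub_mulVec, smul_mulVec, one_mulVec, dotProduct_sub,
        dotProduct_smul, smul_eq_mul]
      have h1 := sq_quad_lb hσV hσVle x
      have h2 : x ⬝ᵥ ((VhK * VhK) *ᵥ x) = (VhK *ᵥ x) ⬝ᵥ (VhK *ᵥ x) := by
        rw [← Matrix.mulVec_mulVec]
        rw [Matrix.dotProduct_mulVec x VhK (VhK *ᵥ x)]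
        congr 1
        rw [← Matrix.mulVec_transpose, hVhKT]
      rw [h2]
      linarith
  have step3 : σV ^ 2 * (E * Eᵀ).trace ≤ (E * (VhK * VhK) * Eᵀ).trace := by
    have hpsd : (E * ((VhK * VhK) - σV ^ 2 • (1 : Matrix (Fin d) (Fin d) ℝ)) * Eᵀ).PosSemidef := by
      have := hVsq.mul_mul_conjTranspose_same E
      rwa [hct] at this
    have h := psd_trace_nonneg hpsd
    rw [Matrix.mul_sub, Matrix.sub_mul, Matrix.trace_sub] at h
    rw [Matrix.mul_smul, Matrix.smul_mul, Matrix.mul_one, Matrix.trace_smul, smul_eq_mul] at h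
    linarith
  -- Step 4 : frobenius norm computation
  have step4 : frobNorm ((2 : ℝ) • (EK * (P * VhK * Pᵀ))) ^ 2
      = 4 * (E * (VhK * VhK) * Eᵀ).trace := by
    rw [frobNorm_sq]
    have hG : ((2 : ℝ) • (EK * (P * VhK * Pᵀ)))ᵀ * ((2 : ℝ) • (EK * (P * VhK * Pᵀ)))
        = (4 : ℝ) • (P * VhK * Eᵀ * (E * VhK * Pᵀ)) := by
      rw [Matrix.transpose_smul, Matrix.smul_mul, Matrix.mul_smul, smul_smul]
      norm_num
      rw [hE]
      simp only [Matrix.transpose_mul, Matrix.transpose_transpose, hVhKT, Matrix.mul_assoc]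
    rw [hG, Matrix.trace_smul, smul_eq_mul]
    congr 1
    rw [Matrix.trace_mul_comm]
    have : E * VhK * Pᵀ * (P * VhK * Eᵀ) = E * (VhK * VhK) * Eᵀ := by
      simp only [Matrix.mul_assoc]
      rw [← Matrix.mul_assoc Pᵀ P, hP, Matrix.one_mul]
    rw [this]
  -- trace of E Eᵀ is nonneg, and of E VhK² Eᵀ
  have hT0 : 0 ≤ (E * Eᵀ).trace := psd_trace_nonneg hEEt
  have hB1t : 0 ≤ (Eᵀ * M⁻¹ * E).trace := psd_trace_nonneg hB1
  -- assemble
  have hchain : JK - Js ≤ c * σR⁻¹ * (E * Eᵀ).trace := by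
    have h0 : JK - Js ≤ (Vhs * (Eᵀ * M⁻¹ * E)).trace := by
      have : Vhs * (EK * P)ᵀ * (R + Pmᵀ * ΨK * Pm)⁻¹ * (EK * P)
          = Vhs * (Eᵀ * M⁻¹ * E) := by
        rw [hE, hM]; simp only [Matrix.mul_assoc]
      rwa [this] at hbound
    calc JK - Js ≤ (Vhs * (Eᵀ * M⁻¹ * E)).trace := h0
      _ ≤ c * (Eᵀ * M⁻¹ * E).trace := step1
      _ ≤ c * (σR⁻¹ * (E * Eᵀ).trace) := mul_le_mul_of_nonneg_left step2 hc0
      _ = c * σR⁻¹ * (E * Eᵀ).trace := by ring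
  have hfinal : c * σR⁻¹ * (E * Eᵀ).trace ≤
      c / (4 * σR * σV ^ 2) * (4 * (E * (VhK * VhK) * Eᵀ).trace) := by
    have hd : c / (4 * σR * σV ^ 2) * (4 * (E * (VhK * VhK) * Eᵀ).trace)
        = c * σR⁻¹ * (σV⁻¹ ^ 2 * (E * (VhK * VhK) * Eᵀ).trace) := by
      field_simp
    rw [hd]
    apply mul_le_mul_of_nonneg_left _ (mul_nonneg hc0 (inv_nonneg.mpr hσR.le))
    have hσV2 : (0:ℝ) < σV ^ 2 := by positivity
    rw [show (σV⁻¹ ^ 2 : ℝ) = (σV ^ 2)⁻¹ by rw [inv_pow]]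
    rw [le_inv_mul_iff₀ hσV2]
    exact step3
  rw [step4]
  calc JK - Js ≤ c * σR⁻¹ * (E * Eᵀ).trace := hchain
    _ ≤ c / (4 * σR * σV ^ 2) * (4 * (E * (VhK * VhK) * Eᵀ).trace) := hfinal
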